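/- Let q ∈ F be nonzero and let a, a′, b, b′, ξ ∈ F be such that at least two of the three scalars a·a′, b·b′, ξ are nonzero. Then there exists a nonzero c ∈ F such that ξ = −a·a′·c − b·b′·c^{−1}. Moreover, for any nonzero c ∈ F with ξ = −a·a′·c − b·b′·c^{−1} and every integer i with 1 ≤ i ≤ d: (q^i − q^{−i})(q^{i−d−1} − q^{d−i+1})(ξ + ab·q^{2i−d−1} + a′b′·q^{d−2i+1}) = (q^i − q^{−i})(q^{d−i+1} − q^{i−d−1})(b − a′c·q^{d−2i+1})(b′ − ac·q^{2i−d−1})c^{−1}, and (q^i − q^{−i})(q^{i−d−1} − q^{d−i+1})(ξ + a′b·q^{2i−d−1} + ab′·q^{d−2i+1}) = (q^i − q^{−i})(q^{d−i+1} − q^{i−d−1})(b − ac·q^{d−2i+1})(b′ − a′c·q^{2i−d−1})c^{−1}. -/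

import Mathlib

/-- Lemma 3.4 of the paper: if at least two of `a a'`, `b b'`, `ξ` are nonzero then
`ξ = -a a' c - b b' c⁻¹` for some nonzero `c`, and for any such `c` the split
sequences factor as stated. -/
theorem stmt7 {F : Type*} [Field F] [IsAlgClosed F] {d : ℕ} (hd : 3 ≤ d)
    (q a a' b b' ξ : F) (hq : q ≠ 0)
    (h2 : (a * a' ≠ 0 ∧ b * b' ≠ 0) ∨ (a * a' ≠ 0 ∧ ξ ≠ 0) ∨ (b * b' ≠ 0 ∧ ξ ≠ 0)) :
    (∃ c : F, c ≠ 0 ∧ ξ = -(a * a' * c) - b * b' * c⁻¹) ∧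
    ∀ c : F, c ≠ 0 → ξ = -(a * a' * c) - b * b' * c⁻¹ →
      ∀ i : ℕ, 1 ≤ i → i ≤ d →
        ((q ^ (i : ℤ) - q ^ (-(i : ℤ))) * (q ^ ((i : ℤ) - (d : ℤ) - 1) - q ^ ((d : ℤ) - (i : ℤ) + 1)) *
            (ξ + a * b * q ^ (2 * (i : ℤ) - (d : ℤ) - 1) + a' * b' * q ^ ((d : ℤ) - 2 * (i : ℤ) + 1)) =
          (q ^ (i : ℤ) - q ^ (-(i : ℤ))) * (q ^ ((d : ℤ) - (i : ℤ) + 1) - q ^ ((i : ℤ) - (d : ℤ) - 1)) *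
            (b - a' * c * q ^ ((d : ℤ) - 2 * (i : ℤ) + 1)) * (b' - a * c * q ^ (2 * (i : ℤ) - (d : ℤ) - 1)) * c⁻¹) ∧
        ((q ^ (i : ℤ) - q ^ (-(i : ℤ))) * (q ^ ((i : ℤ) - (d : ℤ) - 1) - q ^ ((d : ℤ) - (i : ℤ) + 1)) *
            (ξ + a' * b * q ^ (2 * (i : ℤ) - (d : ℤ) - 1) + a * b' * q ^ ((d : ℤ) - 2 * (i : ℤ) + 1)) =
          (q ^ (i : ℤ) - q ^ (-(i : ℤ))) * (q ^ ((d : ℤ) - (i : ℤ) + 1) - q ^ ((i : ℤ) - (d : ℤ) - 1)) *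
            (b - a * c * q ^ ((d : ℤ) - 2 * (i : ℤ) + 1)) * (b' - a' * c * q ^ (2 * (i : ℤ) - (d : ℤ) - 1)) * c⁻¹) := by
  constructor
  · by_cases haa : a * a' = 0
    · have hb : b * b' ≠ 0 ∧ ξ ≠ 0 := by tauto
      have hb0 : b ≠ 0 := left_ne_zero_of_mul hb.1
      have hb'0 : b' ≠ 0 := right_ne_zero_of_mul hb.1
      refine ⟨-(b * b') / ξ, ?_, ?_⟩
      · exact div_ne_zero (neg_ne_zero.mpr hb.1) hb.2
      · field_simp [haa]
        rw [haa, zero_mul, zero_mul, zero_sub, neg_neg, sq, mul_div_assoc, div_self hb.2, mul_one]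
    · by_cases hbb : b * b' = 0
      · have hξ : ξ ≠ 0 := by tauto
        refine ⟨-ξ / (a * a'), ?_, ?_⟩
        · exact div_ne_zero (neg_ne_zero.mpr hξ) haa
        · field_simp [hbb]
          rw [mul_assoc (a * a') b b', hbb, mul_zero, neg_zero, sub_zero, mul_div_cancel_left₀ _ haa]
      · obtain ⟨r, hr⟩ := IsAlgClosed.exists_root
          (Polynomial.C (a * a') * Polynomial.X ^ 2 + Polynomial.C ξ * Polynomial.X
            + Polynomial.C (b * b'))
          (by rw [Polynomial.degree_quadratic haa]; norm_num)
        have hre : a * a' * r ^ 2 + ξ * r + b * b' = 0 := by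
          have h := hr
          simp [Polynomial.IsRoot] at h
          linear_combination h
        have hr0 : r ≠ 0 := by
          intro h
          rw [h] at hre
          simp at hre
          exact hbb (mul_eq_zero.mpr hre)
        refine ⟨r, hr0, ?_⟩
        have hri : r * r⁻¹ = 1 := mul_inv_cancel₀ hr0
        linear_combination r⁻¹ * hre + (-(a * a' * r) - ξ) * hri
  · intro c hc hξ i hi1 hid
    have key : q ^ (2 * (i : ℤ) - (d : ℤ) - 1) * q ^ ((d : ℤ) - 2 * (i : ℤ) + 1) = 1 := by
      rw [← zpow_add₀ hq]
      norm_num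
    have hci : c * c⁻¹ = 1 := mul_inv_cancel₀ hc
    set s := q ^ (2 * (i : ℤ) - (d : ℤ) - 1) with hs
    set t := q ^ ((d : ℤ) - 2 * (i : ℤ) + 1) with ht
    set u := q ^ ((i : ℤ) - (d : ℤ) - 1) with hu
    set v := q ^ ((d : ℤ) - (i : ℤ) + 1) with hv
    set w := q ^ (i : ℤ) with hw
    set w' := q ^ (-(i : ℤ)) with hw'
    constructor
    · rw [hξ]
      linear_combination ((w - w') * (u - v)) * (a * a' * c * s * t - a * b * s - a' * b' * t) * hci
        + ((w - w') * (u - v)) * (a * a' * c) * key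
    · rw [hξ]
      linear_combination ((w - w') * (u - v)) * (a * a' * c * s * t - a' * b * s - a * b' * t) * hci
        + ((w - w') * (u - v)) * (a * a' * c) * key
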